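/- Let X be a nonempty finite set, let F_A, F_B : X → {-1, 1}, let c ≥ 0, and let u, v : X → ℝ satisfy |u(x) - v(x)| ≤ 2c for every x ∈ X. Let δ denote the fraction of elements x ∈ X with F_A(x) ≠ F_B(x). Then the average over x ∈ X of ((u(x) - F_A(x))^2 + (v(x) - F_B(x))^2)/2 is at least δ · (max(1 - c, 0))^2. -/
import Mathlib


open scoped Classical

theorem stmt2 {X : Type*} [Fintype X] [Nonempty X]
    (FA FB : X → ℝ) (hFA : ∀ x, FA x = 1 ∨ FA x = -1) (hFB : ∀ x, FB x = 1 ∨ FB x = -1)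
    (c : ℝ) (hc : 0 ≤ c) (u v : X → ℝ) (huv : ∀ x, |u x - v x| ≤ 2 * c) :
    ((Finset.univ.filter (fun x => FA x ≠ FB x)).card : ℝ) / (Fintype.card X)
        * (max (1 - c) 0) ^ 2
      ≤ (∑ x, ((u x - FA x) ^ 2 + (v x - FB x) ^ 2) / 2) / (Fintype.card X) := by
  have hcard : (0 : ℝ) < Fintype.card X := by
    exact_mod_cast Fintype.card_pos
  rw [div_mul_eq_mul_div, div_le_div_iff_of_pos_right hcard]
  set m : ℝ := max (1 - c) 0 with hm
  have hm0 : 0 ≤ m := le_max_right _ _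
  have key : ∀ x ∈ Finset.univ.filter (fun x => FA x ≠ FB x),
      m ^ 2 ≤ ((u x - FA x) ^ 2 + (v x - FB x) ^ 2) / 2 := by
    intro x hx
    simp only [Finset.mem_filter] at hx
    have hne := hx.2
    have h1 := huv x
    have h1' : -(2 * c) ≤ u x - v x ∧ u x - v x ≤ 2 * c := abs_le.mp h1
    have hmle : m ≤ 1 - c ∨ m = 0 := by
      rcases le_total (1 - c) 0 with h | h
      · right; simp [hm, h]
      · left; simp [hm, h]
    rcases hmle with hml | hml
    · rcases hFA x with ha | ha <;> rcases hFB x with hb | hb <;>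
        simp [ha, hb] at hne ⊢ <;>
        nlinarith [sq_nonneg (u x - FA x + (v x - FB x)), sq_nonneg (u x - v x),
          h1'.1, h1'.2, sq_nonneg (u x + v x), sq_nonneg (u x - v x - 2*c),
          sq_nonneg (u x - v x + 2*c)]
    · rw [hml]
      have : (0:ℝ)^2 = 0 := by norm_num
      rw [this]
      positivity
  calc ((Finset.univ.filter (fun x => FA x ≠ FB x)).card : ℝ) * m ^ 2
      = ∑ _x ∈ Finset.univ.filter (fun x => FA x ≠ FB x), m ^ 2 := by
        rw [Finset.sum_const, nsmul_eq_mul]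
    _ ≤ ∑ x ∈ Finset.univ.filter (fun x => FA x ≠ FB x),
          ((u x - FA x) ^ 2 + (v x - FB x) ^ 2) / 2 := Finset.sum_le_sum key
    _ ≤ ∑ x, ((u x - FA x) ^ 2 + (v x - FB x) ^ 2) / 2 := by
        apply Finset.sum_le_sum_of_subset_of_nonneg (Finset.filter_subset _ _)
        intro x _ _; positivity
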